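/- Let λ, μ > 0 with ρ = λ/μ < 1, and let a, b ≥ 0 be integers. Then ∫₀^∞ f_{a+1}(t) · ∑_{n=0}^∞ p_{b,n}(t)·(n+1)/μ dt = 1/μ + (1/μ)·∫₀^∞ f_{a+1}(t)·EL_b(t) dt, where f_{a+1}(t) = μ^{a+1} t^a e^{−μ t}/a!, p_{b,n}(t) is given by the explicit transient probability formula, and EL_b(t) is given by the explicit expected-length formula; consequently (a+1)/μ + ∫₀^∞ f_{a+1}(t) ∑_{n=0}^∞ p_{b,n}(t)·(n+1)/μ dt = (a+2)/μ + (1/μ)·∫₀^∞ f_{a+1}(t)·EL_b(t) dt. -/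

import Mathlib

open Real MeasureTheory Set Filter

/-- γ(y) = 1 + ρ − 2√ρ·cos(y). -/
noncomputable def gam (ρ y : ℝ) : ℝ := 1 + ρ - 2 * Real.sqrt ρ * Real.cos y

/-- a_k(y) = sin(k·y) − √ρ·sin((k+1)·y). -/
noncomputable def aco (ρ : ℝ) (k : ℕ) (y : ℝ) : ℝ :=
  Real.sin ((k : ℝ) * y) - Real.sqrt ρ * Real.sin (((k : ℝ) + 1) * y)

/-- Transient expected queue length of an M/M/1 queue started with `i` customers. -/
noncomputable def EL (lam mu : ℝ) (i : ℕ) (t : ℝ) : ℝ :=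
  (2 / Real.pi) * (lam / mu) ^ ((1 - (i : ℝ)) / 2) *
    (∫ y in (0 : ℝ)..Real.pi,
      Real.exp (-(mu * t * gam (lam / mu) y)) / (gam (lam / mu) y) ^ 2 *
        (aco (lam / mu) i y * Real.sin y)) +
  (lam / mu) / (1 - lam / mu)

/-- Transient probability that an M/M/1 queue started with `i` customers has `j` at time `t`. -/
noncomputable def pq (lam mu : ℝ) (i j : ℕ) (t : ℝ) : ℝ :=
  (2 / Real.pi) * (lam / mu) ^ (((j : ℝ) - (i : ℝ)) / 2) *
    (∫ y in (0 : ℝ)..Real.pi,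
      Real.exp (-(mu * t * gam (lam / mu) y)) / gam (lam / mu) y *
        (aco (lam / mu) i y * aco (lam / mu) j y)) +
  (1 - lam / mu) * (lam / mu) ^ j

/-- Erlang(n) density with rate `mu`: f_n(t) = μⁿ t^{n−1} e^{−μt}/(n−1)!. -/
noncomputable def erl (mu : ℝ) (n : ℕ) (t : ℝ) : ℝ :=
  mu ^ n * t ^ (n - 1) * Real.exp (-(mu * t)) / (Nat.factorial (n - 1) : ℝ)

/-- Expected total time to complete queue with `a` customers first, then queue with `b`. -/
noncomputable def ETT (lam mu : ℝ) (a b : ℕ) : ℝ :=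
  ((a : ℝ) + 2) / mu + (1 / mu) * ∫ t in Set.Ioi (0 : ℝ), erl mu (a + 1) t * EL lam mu b t

lemma gam_ge {ρ : ℝ} (hρ : 0 ≤ ρ) (y : ℝ) : (1 - Real.sqrt ρ)^2 ≤ gam ρ y := by
  have h1 := Real.cos_le_one y
  have h2 := Real.sqrt_nonneg ρ
  have h3 := Real.sq_sqrt hρ
  unfold gam; nlinarith

lemma gam_pos {ρ : ℝ} (hρ : 0 ≤ ρ) (hρ1 : ρ < 1) (y : ℝ) : 0 < gam ρ y := by
  have hx : Real.sqrt ρ < 1 := by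
    rw [show (1:ℝ) = Real.sqrt 1 by simp]
    exact Real.sqrt_lt_sqrt hρ hρ1
  have := gam_ge hρ y
  nlinarith

lemma sin_series {x : ℝ} (hx0 : 0 ≤ x) (hx1 : x < 1) (y : ℝ) :
    HasSum (fun n : ℕ => x ^ n * Real.sin ((n : ℝ) * y))
      (x * Real.sin y / (1 + x^2 - 2 * x * Real.cos y)) := by
  set z : ℂ := (x : ℂ) * Complex.exp ((y : ℂ) * Complex.I) with hz
  have hnorm : ‖z‖ < 1 := by
    rw [hz, norm_mul, Complex.norm_exp_ofReal_mul_I]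
    simpa [abs_of_nonneg hx0] using hx1
  have hgeo : HasSum (fun n : ℕ => z ^ n) (1 - z)⁻¹ :=
    hasSum_geometric_of_norm_lt_one hnorm
  have him := hgeo.mapL Complex.imCLM
  have hzn : ∀ n : ℕ, Complex.imCLM (z ^ n) = x ^ n * Real.sin ((n : ℝ) * y) := by
    intro n
    rw [hz, mul_pow, ← Complex.exp_nat_mul]
    have : ((n : ℂ) * ((y : ℂ) * Complex.I)) = ((n * y : ℝ) : ℂ) * Complex.I := by
      push_cast; ring
    rw [this, ← Complex.ofReal_pow, Complex.imCLM_apply, Complex.im_ofReal_mul,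
      Complex.exp_ofReal_mul_I_im]
  have hval : Complex.imCLM (1 - z)⁻¹ = x * Real.sin y / (1 + x^2 - 2 * x * Real.cos y) := by
    have h1 : (1 - z).im = -(x * Real.sin y) := by
      simp [hz, Complex.exp_ofReal_mul_I_im, Complex.im_ofReal_mul]
    have h2 : Complex.normSq (1 - z) = 1 + x^2 - 2 * x * Real.cos y := by
      simp [Complex.normSq_apply, Complex.sub_re, Complex.sub_im, hz,
        Complex.re_ofReal_mul, Complex.im_ofReal_mul,
        Complex.exp_ofReal_mul_I_re, Complex.exp_ofReal_mul_I_im]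
      have := Real.sin_sq_add_cos_sq y
      nlinarith
    simp only [Complex.imCLM_apply, Complex.inv_im, h1, h2]
    ring
  rw [hval] at him
  convert him using 2 with n
  exact (hzn n).symm

lemma partial_sum_eq {x : ℝ} (y : ℝ) (N : ℕ) :
    ∑ n ∈ Finset.range N, ((n : ℝ) + 1) * x ^ n *
        (Real.sin ((n : ℝ) * y) - x * Real.sin (((n : ℝ) + 1) * y))
      = ∑ n ∈ Finset.range N, x ^ n * Real.sin ((n : ℝ) * y)
        - (N : ℝ) * x ^ N * Real.sin ((N : ℝ) * y) := by
  induction N with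
  | zero => simp
  | succ N ih =>
      rw [Finset.sum_range_succ, Finset.sum_range_succ, ih]
      push_cast
      ring

lemma summable_aux {x : ℝ} (hx0 : 0 ≤ x) (hx1 : x < 1) :
    Summable (fun n : ℕ => ((n : ℝ) + 1) * x ^ n) := by
  have h1 : Summable (fun n : ℕ => (n : ℝ) * x ^ n) := by
    simpa using summable_pow_mul_geometric_of_norm_lt_one 1
      (r := x) (by rwa [Real.norm_eq_abs, abs_of_nonneg hx0])
  have h2 : Summable (fun n : ℕ => x ^ n) :=
    summable_geometric_of_lt_one hx0 hx1
  simpa [add_mul] using h1.add h2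

lemma main_series {ρ : ℝ} (hρ0 : 0 ≤ ρ) (hρ1 : ρ < 1) (y : ℝ) :
    HasSum (fun n : ℕ => ((n : ℝ) + 1) * (Real.sqrt ρ) ^ n * aco ρ n y)
      (Real.sqrt ρ * Real.sin y / gam ρ y) := by
  set x := Real.sqrt ρ with hxdef
  have hx0 : 0 ≤ x := Real.sqrt_nonneg ρ
  have hx1 : x < 1 := by
    rw [hxdef, show (1:ℝ) = Real.sqrt 1 by simp]
    exact Real.sqrt_lt_sqrt hρ0 hρ1
  have hgam : gam ρ y = 1 + x ^ 2 - 2 * x * Real.cos y := by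
    rw [gam, hxdef, Real.sq_sqrt hρ0]
  have hsum : Summable (fun n : ℕ => ((n : ℝ) + 1) * x ^ n * aco ρ n y) := by
    apply Summable.of_norm
    have hg : Summable (fun n : ℕ => ((n : ℝ) + 1) * x ^ n * 2) := by
      simpa [mul_comm] using (summable_aux hx0 hx1).mul_right 2
    refine hg.of_nonneg_of_le (fun n => norm_nonneg _) ?_
    · intro n
      rw [Real.norm_eq_abs, abs_mul, abs_mul]
      have h1 : |aco ρ n y| ≤ 2 := by
        rw [aco]
        calc |Real.sin ((n:ℝ)*y) - x * Real.sin (((n:ℝ)+1)*y)|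
            ≤ |Real.sin ((n:ℝ)*y)| + |x * Real.sin (((n:ℝ)+1)*y)| := abs_sub _ _
          _ ≤ 1 + 1 := by
              gcongr
              · exact Real.abs_sin_le_one _
              · rw [abs_mul]
                calc |x| * |Real.sin (((n:ℝ)+1)*y)| ≤ 1 * 1 := by
                      gcongr
                      · rw [abs_of_nonneg hx0]; exact hx1.le
                      · exact Real.abs_sin_le_one _
                  _ = 1 := by ring
          _ = 2 := by norm_num
      have h2 : |((n:ℝ)+1)| = (n:ℝ)+1 := abs_of_nonneg (by positivity)
      have h3 : |x ^ n| = x ^ n := abs_of_nonneg (by positivity)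
      rw [h2, h3]
      exact mul_le_mul_of_nonneg_left h1 (by positivity)
  rw [hsum.hasSum_iff_tendsto_nat]
  have key : ∀ N : ℕ, ∑ n ∈ Finset.range N, ((n : ℝ) + 1) * x ^ n * aco ρ n y
      = ∑ n ∈ Finset.range N, x ^ n * Real.sin ((n : ℝ) * y)
        - (N : ℝ) * x ^ N * Real.sin ((N : ℝ) * y) := by
    intro N
    rw [← partial_sum_eq y N]
    apply Finset.sum_congr rfl
    intro n _
    rw [aco]
  simp_rw [key]
  have hlim1 : Tendsto (fun N => ∑ n ∈ Finset.range N, x ^ n * Real.sin ((n : ℝ) * y))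
      atTop (nhds (x * Real.sin y / gam ρ y)) := by
    rw [hgam]
    exact (sin_series hx0 hx1 y).tendsto_sum_nat
  have hlim2 : Tendsto (fun N : ℕ => (N : ℝ) * x ^ N * Real.sin ((N : ℝ) * y))
      atTop (nhds 0) := by
    have hb : Tendsto (fun N : ℕ => (N : ℝ) * x ^ N) atTop (nhds 0) := by
      have : Summable (fun n : ℕ => (n : ℝ) * x ^ n) := by
        simpa using summable_pow_mul_geometric_of_norm_lt_one 1
          (r := x) (by rwa [Real.norm_eq_abs, abs_of_nonneg hx0])
      exact this.tendsto_atTop_zero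
    have hub : ∀ N : ℕ, |(N : ℝ) * x ^ N * Real.sin ((N : ℝ) * y)| ≤ (N : ℝ) * x ^ N := by
      intro N
      rw [abs_mul]
      calc |(N:ℝ) * x ^ N| * |Real.sin ((N:ℝ)*y)| ≤ |(N:ℝ) * x ^ N| * 1 :=
            mul_le_mul_of_nonneg_left (Real.abs_sin_le_one _) (abs_nonneg _)
        _ = (N:ℝ) * x ^ N := by rw [mul_one, abs_of_nonneg (by positivity)]
    exact squeeze_zero_norm hub hb
  simpa using hlim1.sub hlim2

lemma abs_aco_le {ρ : ℝ} (hρ0 : 0 ≤ ρ) (hρ1 : ρ < 1) (k : ℕ) (y : ℝ) : |aco ρ k y| ≤ 2 := by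
  have hx0 : 0 ≤ Real.sqrt ρ := Real.sqrt_nonneg ρ
  have hx1 : Real.sqrt ρ < 1 := by
    rw [show (1:ℝ) = Real.sqrt 1 by simp]
    exact Real.sqrt_lt_sqrt hρ0 hρ1
  rw [aco]
  calc |Real.sin ((k:ℝ)*y) - Real.sqrt ρ * Real.sin (((k:ℝ)+1)*y)|
      ≤ |Real.sin ((k:ℝ)*y)| + |Real.sqrt ρ * Real.sin (((k:ℝ)+1)*y)| := abs_sub _ _
    _ ≤ 1 + 1 := by
        gcongr
        · exact Real.abs_sin_le_one _
        · rw [abs_mul]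
          calc |Real.sqrt ρ| * |Real.sin (((k:ℝ)+1)*y)| ≤ 1 * 1 := by
                gcongr
                · rw [abs_of_nonneg hx0]; exact hx1.le
                · exact Real.abs_sin_le_one _
            _ = 1 := by ring
    _ = 2 := by norm_num

lemma hasSum_I {ρ mu t : ℝ} (hρ0 : 0 < ρ) (hρ1 : ρ < 1) (hmu : 0 < mu) (ht : 0 ≤ t) (b : ℕ) :
    HasSum (fun n : ℕ => ((n : ℝ) + 1) * (Real.sqrt ρ) ^ n *
        ∫ y in (0:ℝ)..Real.pi, Real.exp (-(mu * t * gam ρ y)) / gam ρ y *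
          (aco ρ b y * aco ρ n y))
      (Real.sqrt ρ * ∫ y in (0:ℝ)..Real.pi, Real.exp (-(mu * t * gam ρ y)) / (gam ρ y) ^ 2 *
          (aco ρ b y * Real.sin y)) := by
  set x := Real.sqrt ρ with hxdef
  have hx0 : 0 ≤ x := Real.sqrt_nonneg ρ
  have hx1 : x < 1 := by
    rw [hxdef, show (1:ℝ) = Real.sqrt 1 by simp]
    exact Real.sqrt_lt_sqrt hρ0.le hρ1
  have hgpos : ∀ y, 0 < gam ρ y := gam_pos hρ0.le hρ1
  have hgmin : ∀ y, (1 - x) ^ 2 ≤ gam ρ y := gam_ge hρ0.le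
  have hxlt : 0 < (1 - x) ^ 2 := by nlinarith
  -- the inner pointwise function
  set F : ℕ → ℝ → ℝ := fun n y => ((n : ℝ) + 1) * x ^ n *
    (Real.exp (-(mu * t * gam ρ y)) / gam ρ y * (aco ρ b y * aco ρ n y)) with hFdef
  have hgcont : Continuous (gam ρ) := by
    unfold gam; continuity
  have hacocont : ∀ k : ℕ, Continuous (aco ρ k) := by
    intro k; unfold aco; continuity
  have hFcont : ∀ n, Continuous (F n) := by
    intro n
    apply Continuous.mul continuous_const
    apply Continuous.mul
    · exact (Real.continuous_exp.comp (by continuity)).div hgcont (fun y => (hgpos y).ne')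
    · exact ((hacocont b).mul (hacocont n))
  have hF_int : ∀ n, IntegrableOn (F n) (Set.Ioc 0 Real.pi) := by
    intro n
    exact (hFcont n).integrableOn_Ioc
  -- bound
  have hFbound : ∀ n y, 0 ≤ t → ‖F n y‖ ≤ ((n : ℝ) + 1) * x ^ n * (4 / (1 - x) ^ 2) := by
    intro n y _
    rw [hFdef]
    rw [Real.norm_eq_abs, abs_mul, abs_mul,
      abs_of_nonneg (show (0:ℝ) ≤ (n:ℝ)+1 by positivity),
      abs_of_nonneg (by positivity : (0:ℝ) ≤ x ^ n)]
    apply mul_le_mul_of_nonneg_left _ (show (0:ℝ) ≤ ((n:ℝ)+1) * x ^ n by positivity)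
    rw [abs_mul]
    have h1 : |Real.exp (-(mu * t * gam ρ y)) / gam ρ y| ≤ 1 / (1 - x) ^ 2 := by
      rw [abs_div, abs_of_nonneg (Real.exp_nonneg _), abs_of_pos (hgpos y)]
      apply div_le_div₀ (by positivity)
      · exact Real.exp_le_one_iff.mpr
          (by nlinarith [mul_nonneg (mul_nonneg hmu.le ht) (hgpos y).le])
      · exact hxlt
      · exact hgmin y
    have h2 : |aco ρ b y * aco ρ n y| ≤ 4 := by
      rw [abs_mul]
      calc |aco ρ b y| * |aco ρ n y| ≤ 2 * 2 := by
            exact mul_le_mul (abs_aco_le hρ0.le hρ1 b y) (abs_aco_le hρ0.le hρ1 n y)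
              (abs_nonneg _) (by norm_num)
        _ = 4 := by norm_num
    calc |Real.exp (-(mu * t * gam ρ y)) / gam ρ y| * |aco ρ b y * aco ρ n y|
        ≤ (1 / (1 - x) ^ 2) * 4 := mul_le_mul h1 h2 (abs_nonneg _) (by positivity)
      _ = 4 / (1 - x) ^ 2 := by ring
  -- summability of integral norms
  have hnorm_int : ∀ n, ∫ y in Set.Ioc (0:ℝ) Real.pi, ‖F n y‖
      ≤ ((n : ℝ) + 1) * x ^ n * (4 / (1 - x) ^ 2) * Real.pi := by
    intro n
    have : ∫ y in Set.Ioc (0:ℝ) Real.pi, ‖F n y‖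
        ≤ ∫ _ in Set.Ioc (0:ℝ) Real.pi, ((n : ℝ) + 1) * x ^ n * (4 / (1 - x) ^ 2) := by
      apply integral_mono_of_nonneg
      · exact Filter.Eventually.of_forall fun y => norm_nonneg _
      · exact integrableOn_const measure_Ioc_lt_top.ne
      · exact Filter.Eventually.of_forall fun y => hFbound n y ht
    calc _ ≤ _ := this
      _ = ((n : ℝ) + 1) * x ^ n * (4 / (1 - x) ^ 2) * Real.pi := by
          rw [setIntegral_const, measureReal_def, Real.volume_Ioc,
            ENNReal.toReal_ofReal (by simpa using Real.pi_pos.le : (0:ℝ) ≤ Real.pi - 0),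
            smul_eq_mul]
          ring
  have hF_sum : Summable (fun n => ∫ y in Set.Ioc (0:ℝ) Real.pi, ‖F n y‖) := by
    apply Summable.of_nonneg_of_le (fun n => integral_nonneg fun y => norm_nonneg _) hnorm_int
    simpa [mul_assoc] using (summable_aux hx0 hx1).mul_right ((4 / (1 - x) ^ 2) * Real.pi)
  -- the interchange
  have hint := MeasureTheory.hasSum_integral_of_summable_integral_norm
    (μ := volume.restrict (Set.Ioc (0:ℝ) Real.pi)) hF_int hF_sum
  -- pointwise tsum value
  have htsum : ∀ y : ℝ, (∑' n, F n y)
      = Real.sqrt ρ * (Real.exp (-(mu * t * gam ρ y)) / (gam ρ y) ^ 2 *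
          (aco ρ b y * Real.sin y)) := by
    intro y
    have h0 := (main_series hρ0.le hρ1 y).mul_left
      (Real.exp (-(mu * t * gam ρ y)) / gam ρ y * aco ρ b y)
    have heq : ∀ n : ℕ, Real.exp (-(mu * t * gam ρ y)) / gam ρ y * aco ρ b y *
        (((n : ℝ) + 1) * (Real.sqrt ρ) ^ n * aco ρ n y) = F n y := by
      intro n; rw [hFdef]; ring
    have heq2 : Real.exp (-(mu * t * gam ρ y)) / gam ρ y * aco ρ b y *
        (Real.sqrt ρ * Real.sin y / gam ρ y)
        = Real.sqrt ρ * (Real.exp (-(mu * t * gam ρ y)) / (gam ρ y) ^ 2 *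
          (aco ρ b y * Real.sin y)) := by
      field_simp
    have h0' := h0.congr_fun fun n => (heq n).symm
    rw [heq2] at h0'
    exact h0'.tsum_eq
  -- rewrite interval integrals as set integrals
  have hpi : (0:ℝ) ≤ Real.pi := Real.pi_pos.le
  convert hint using 2 with n
  · rfl
  · rw [intervalIntegral.integral_of_le hpi, hFdef]
    rw [← integral_const_mul]
  · rw [intervalIntegral.integral_of_le hpi, ← integral_const_mul]
    apply setIntegral_congr_fun measurableSet_Ioc
    intro y _
    exact (htsum y).symm

lemma rpow_helper {ρ : ℝ} (hρ : 0 < ρ) (n b : ℕ) :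
    ρ ^ (((n : ℝ) - (b : ℝ)) / 2) = (Real.sqrt ρ) ^ n * ρ ^ ((-(b : ℝ)) / 2) := by
  rw [Real.sqrt_eq_rpow, ← Real.rpow_natCast (ρ ^ ((1:ℝ)/2)) n, ← Real.rpow_mul hρ.le,
    ← Real.rpow_add hρ]
  congr 1
  ring

lemma rpow_helper1 {ρ : ℝ} (hρ : 0 < ρ) (b : ℕ) :
    ρ ^ ((1 - (b : ℝ)) / 2) = Real.sqrt ρ * ρ ^ ((-(b : ℝ)) / 2) := by
  rw [Real.sqrt_eq_rpow, ← Real.rpow_add hρ]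
  congr 1
  ring

lemma tsum_pq (lam mu : ℝ) (hlam : 0 < lam) (hmu : 0 < mu) (hρ : lam / mu < 1) (b : ℕ)
    (t : ℝ) (ht : 0 ≤ t) :
    ∑' n : ℕ, pq lam mu b n t * (((n : ℝ) + 1) / mu) = (EL lam mu b t + 1) / mu := by
  set ρ := lam / mu with hρdef
  have hρ0 : 0 < ρ := div_pos hlam hmu
  have hρne : (1 : ℝ) - ρ ≠ 0 := by linarith
  have h1 := (hasSum_I hρ0 hρ hmu ht b).mul_left
    ((2 / Real.pi) * ρ ^ ((-(b : ℝ)) / 2) * (1 / mu))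
  have hgeo1 : HasSum (fun n : ℕ => (n : ℝ) * ρ ^ n) (ρ / (1 - ρ) ^ 2) :=
    hasSum_coe_mul_geometric_of_norm_lt_one
      (by rw [Real.norm_eq_abs, abs_of_pos hρ0]; exact hρ)
  have hgeo2 : HasSum (fun n : ℕ => ρ ^ n) ((1 - ρ)⁻¹) :=
    hasSum_geometric_of_lt_one hρ0.le hρ
  have h2 := (hgeo1.add hgeo2).mul_left ((1 - ρ) / mu)
  have htot := h1.add h2
  have hfun : ∀ n : ℕ,
      ((2 / Real.pi) * ρ ^ ((-(b : ℝ)) / 2) * (1 / mu) *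
        (((n : ℝ) + 1) * (Real.sqrt ρ) ^ n *
          ∫ y in (0:ℝ)..Real.pi, Real.exp (-(mu * t * gam ρ y)) / gam ρ y *
            (aco ρ b y * aco ρ n y)))
      + ((1 - ρ) / mu) * ((n : ℝ) * ρ ^ n + ρ ^ n)
      = pq lam mu b n t * (((n : ℝ) + 1) / mu) := by
    intro n
    rw [pq, ← hρdef, rpow_helper hρ0 n b]
    ring
  have htot2 := htot.congr_fun fun n => (hfun n).symm
  rw [htot2.tsum_eq, EL, ← hρdef, rpow_helper1 hρ0 b]
  field_simp
  ring

lemma erl_eq (mu : ℝ) (a : ℕ) (t : ℝ) :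
    erl mu (a + 1) t = mu ^ (a + 1) / (Nat.factorial a : ℝ) * (t ^ a * Real.exp (-(mu * t))) := by
  rw [erl]
  simp only [Nat.add_sub_cancel]
  ring

lemma erl_integrableOn {mu : ℝ} (hmu : 0 < mu) (a : ℕ) :
    IntegrableOn (erl mu (a + 1)) (Set.Ioi (0:ℝ)) := by
  have h := integrableOn_rpow_mul_exp_neg_mul_rpow (s := (a : ℝ)) (p := 1)
    (by exact lt_of_lt_of_le neg_one_lt_zero (Nat.cast_nonneg a)) zero_lt_one hmu
  simp only [Real.rpow_one, Real.rpow_natCast, neg_mul] at h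
  have h2 : IntegrableOn (fun x : ℝ => mu ^ (a + 1) / (Nat.factorial a : ℝ) *
      (x ^ a * Real.exp (-(mu * x)))) (Set.Ioi (0:ℝ)) :=
    h.const_mul (mu ^ (a + 1) / (Nat.factorial a : ℝ))
  exact h2.congr_fun (fun t _ => (erl_eq mu a t).symm) measurableSet_Ioi

lemma erl_integral {mu : ℝ} (hmu : 0 < mu) (a : ℕ) :
    ∫ t in Set.Ioi (0:ℝ), erl mu (a + 1) t = 1 := by
  have h := integral_rpow_mul_exp_neg_mul_Ioi (a := (a : ℝ) + 1) (r := mu)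
    (by positivity) hmu
  rw [Real.Gamma_nat_eq_factorial] at h
  simp only [add_sub_cancel_right, Real.rpow_natCast] at h
  have hcast : ((a : ℝ) + 1) = ((a + 1 : ℕ) : ℝ) := by push_cast; ring
  rw [hcast, Real.rpow_natCast] at h
  have heq : ∀ t : ℝ, erl mu (a + 1) t
      = mu ^ (a + 1) / (Nat.factorial a : ℝ) * (t ^ a * Real.exp (-(mu * t))) :=
    erl_eq mu a
  rw [show (fun t => erl mu (a+1) t) = fun t =>
    mu ^ (a + 1) / (Nat.factorial a : ℝ) * (t ^ a * Real.exp (-(mu * t))) from funext heq]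
  rw [integral_const_mul, h]
  have hfa : (Nat.factorial a : ℝ) ≠ 0 := Nat.cast_ne_zero.mpr (Nat.factorial_ne_zero a)
  have hmune : mu ^ (a + 1) ≠ 0 := pow_ne_zero _ hmu.ne'
  field_simp
  rw [← mul_pow, mul_one_div_cancel hmu.ne', one_pow]

lemma EL_continuous (lam mu : ℝ) (hlam : 0 < lam) (hmu : 0 < mu) (hρ : lam / mu < 1)
    (b : ℕ) : Continuous (EL lam mu b) := by
  have hρ0 : (0:ℝ) < lam / mu := div_pos hlam hmu
  have hgpos : ∀ y, 0 < gam (lam / mu) y := gam_pos hρ0.le hρ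
  unfold EL
  apply Continuous.add _ continuous_const
  apply Continuous.mul continuous_const
  apply intervalIntegral.continuous_parametric_intervalIntegral_of_continuous'
  have hgcont : Continuous fun p : ℝ × ℝ => gam (lam / mu) p.2 := by
    unfold gam; fun_prop
  apply Continuous.mul
  · apply Continuous.div
    · apply Real.continuous_exp.comp
      apply Continuous.neg
      exact (continuous_const.mul continuous_fst).mul hgcont
    · exact hgcont.pow 2
    · intro p; exact pow_ne_zero 2 (hgpos p.2).ne'
  · have : Continuous fun p : ℝ × ℝ => aco (lam / mu) b p.2 := by
      unfold aco; fun_prop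
    exact this.mul (Real.continuous_sin.comp continuous_snd)

lemma EL_bound (lam mu : ℝ) (hlam : 0 < lam) (hmu : 0 < mu) (hρ : lam / mu < 1) (b : ℕ) :
    ∃ M : ℝ, ∀ t : ℝ, 0 ≤ t → |EL lam mu b t| ≤ M := by
  set ρ := lam / mu with hρdef
  have hρ0 : (0:ℝ) < ρ := div_pos hlam hmu
  set x := Real.sqrt ρ with hxdef
  have hx0 : 0 ≤ x := Real.sqrt_nonneg ρ
  have hx1 : x < 1 := by
    rw [hxdef, show (1:ℝ) = Real.sqrt 1 by simp]
    exact Real.sqrt_lt_sqrt hρ0.le hρ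
  have hgpos : ∀ y, 0 < gam ρ y := gam_pos hρ0.le hρ
  have hgmin : ∀ y, (1 - x) ^ 2 ≤ gam ρ y := gam_ge hρ0.le
  have hxlt : 0 < (1 - x) ^ 2 := by nlinarith
  set C : ℝ := 2 / ((1 - x) ^ 2) ^ 2 with hCdef
  refine ⟨(2 / Real.pi * ρ ^ ((1 - (b:ℝ)) / 2)) * (C * Real.pi) + ρ / (1 - ρ), fun t ht => ?_⟩
  rw [EL, ← hρdef]
  have hIbnd : |∫ y in (0:ℝ)..Real.pi, Real.exp (-(mu * t * gam ρ y)) / (gam ρ y) ^ 2 *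
      (aco ρ b y * Real.sin y)| ≤ C * Real.pi := by
    have := intervalIntegral.norm_integral_le_of_norm_le_const
      (C := C) (f := fun y => Real.exp (-(mu * t * gam ρ y)) / (gam ρ y) ^ 2 *
        (aco ρ b y * Real.sin y)) (a := (0:ℝ)) (b := Real.pi) ?_
    · rw [Real.norm_eq_abs] at this
      calc _ ≤ C * |Real.pi - 0| := this
        _ = C * Real.pi := by rw [sub_zero, abs_of_pos Real.pi_pos]
    · intro y _
      rw [Real.norm_eq_abs, abs_mul, hCdef]
      have h1 : |Real.exp (-(mu * t * gam ρ y)) / (gam ρ y) ^ 2| ≤ 1 / ((1 - x) ^ 2) ^ 2 := by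
        rw [abs_div, abs_of_nonneg (Real.exp_nonneg _), abs_of_pos (pow_pos (hgpos y) 2)]
        apply div_le_div₀ (by positivity)
        · exact Real.exp_le_one_iff.mpr
            (by nlinarith [mul_nonneg (mul_nonneg hmu.le ht) (hgpos y).le])
        · positivity
        · exact pow_le_pow_left₀ hxlt.le (hgmin y) 2
      have h2 : |aco ρ b y * Real.sin y| ≤ 2 := by
        rw [abs_mul]
        calc |aco ρ b y| * |Real.sin y| ≤ 2 * 1 :=
              mul_le_mul (abs_aco_le hρ0.le hρ b y) (Real.abs_sin_le_one y)
                (abs_nonneg _) (by norm_num)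
          _ = 2 := by norm_num
      calc |Real.exp (-(mu * t * gam ρ y)) / (gam ρ y) ^ 2| * |aco ρ b y * Real.sin y|
          ≤ (1 / ((1 - x) ^ 2) ^ 2) * 2 := mul_le_mul h1 h2 (abs_nonneg _) (by positivity)
        _ = 2 / ((1 - x) ^ 2) ^ 2 := by ring
  have hc1 : 0 < 2 / Real.pi * ρ ^ ((1 - (b:ℝ)) / 2) := by
    apply mul_pos (by positivity : (0:ℝ) < 2 / Real.pi)
    exact Real.rpow_pos_of_pos hρ0 _
  calc |2 / Real.pi * ρ ^ ((1 - (b:ℝ)) / 2) * (∫ y in (0:ℝ)..Real.pi,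
        Real.exp (-(mu * t * gam ρ y)) / (gam ρ y) ^ 2 * (aco ρ b y * Real.sin y))
        + ρ / (1 - ρ)|
      ≤ |2 / Real.pi * ρ ^ ((1 - (b:ℝ)) / 2) * (∫ y in (0:ℝ)..Real.pi,
        Real.exp (-(mu * t * gam ρ y)) / (gam ρ y) ^ 2 * (aco ρ b y * Real.sin y))|
        + |ρ / (1 - ρ)| := abs_add_le _ _
    _ ≤ (2 / Real.pi * ρ ^ ((1 - (b:ℝ)) / 2)) * (C * Real.pi) + ρ / (1 - ρ) := by
        apply add_le_add
        · rw [abs_mul, abs_of_pos hc1]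
          exact mul_le_mul_of_nonneg_left hIbnd hc1.le
        · rw [abs_of_nonneg (div_nonneg hρ0.le (by linarith : (0:ℝ) ≤ 1 - ρ))]

/-- The key identity behind Theorem 2.1:
∫₀^∞ f_{a+1}(t)·∑ₙ p_{b,n}(t)·(n+1)/μ dt = 1/μ + (1/μ)·∫₀^∞ f_{a+1}(t)·EL_b(t) dt,
and consequently
(a+1)/μ + ∫₀^∞ f_{a+1}(t)·∑ₙ p_{b,n}(t)·(n+1)/μ dt
  = (a+2)/μ + (1/μ)·∫₀^∞ f_{a+1}(t)·EL_b(t) dt. -/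
theorem ETT_identity (lam mu : ℝ) (hlam : 0 < lam) (hmu : 0 < mu)
    (hρ : lam / mu < 1) (a b : ℕ) :
    (∫ t in Set.Ioi (0 : ℝ),
        erl mu (a + 1) t * ∑' n : ℕ, pq lam mu b n t * (((n : ℝ) + 1) / mu))
      = 1 / mu + (1 / mu) * ∫ t in Set.Ioi (0 : ℝ), erl mu (a + 1) t * EL lam mu b t ∧
    ((a : ℝ) + 1) / mu +
        (∫ t in Set.Ioi (0 : ℝ),
          erl mu (a + 1) t * ∑' n : ℕ, pq lam mu b n t * (((n : ℝ) + 1) / mu))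
      = ((a : ℝ) + 2) / mu +
        (1 / mu) * ∫ t in Set.Ioi (0 : ℝ), erl mu (a + 1) t * EL lam mu b t := by
  have key1 : (∫ t in Set.Ioi (0 : ℝ),
        erl mu (a + 1) t * ∑' n : ℕ, pq lam mu b n t * (((n : ℝ) + 1) / mu))
      = 1 / mu + (1 / mu) * ∫ t in Set.Ioi (0 : ℝ), erl mu (a + 1) t * EL lam mu b t := by
    have herl_cont : Continuous (erl mu (a + 1)) := by
      have : Continuous fun t : ℝ =>
          mu ^ (a + 1) / (Nat.factorial a : ℝ) * (t ^ a * Real.exp (-(mu * t))) := by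
        fun_prop
      exact this.congr fun t => (erl_eq mu a t).symm
    have hEL := EL_continuous lam mu hlam hmu hρ b
    obtain ⟨M, hM⟩ := EL_bound lam mu hlam hmu hρ b
    have h_int_erl := erl_integrableOn hmu a
    have h_int_mul : IntegrableOn (fun t => erl mu (a + 1) t * EL lam mu b t)
        (Set.Ioi (0:ℝ)) := by
      refine Integrable.mono' (h_int_erl.const_mul |M|)
        ((herl_cont.mul hEL).aestronglyMeasurable.restrict) ?_
      rw [ae_restrict_iff' measurableSet_Ioi]
      filter_upwards with t ht
      have ht' : (0:ℝ) ≤ t := le_of_lt ht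
      have herl_nonneg : 0 ≤ erl mu (a + 1) t := by
        rw [erl_eq]; positivity
      rw [Real.norm_eq_abs, abs_mul, abs_of_nonneg herl_nonneg]
      calc erl mu (a + 1) t * |EL lam mu b t| ≤ erl mu (a + 1) t * |M| := by
            apply mul_le_mul_of_nonneg_left _ herl_nonneg
            exact (hM t ht').trans (le_abs_self M)
        _ = |M| * erl mu (a + 1) t := by ring
    have hstep : ∀ t ∈ Set.Ioi (0:ℝ),
        erl mu (a + 1) t * ∑' n : ℕ, pq lam mu b n t * (((n : ℝ) + 1) / mu)
          = (1 / mu) * (erl mu (a + 1) t * EL lam mu b t) + (1 / mu) * erl mu (a + 1) t := by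
      intro t ht
      rw [tsum_pq lam mu hlam hmu hρ b t (le_of_lt ht)]
      ring
    rw [setIntegral_congr_fun measurableSet_Ioi hstep]
    rw [integral_add (h_int_mul.const_mul (1 / mu)) (h_int_erl.const_mul (1 / mu))]
    rw [integral_const_mul, integral_const_mul, erl_integral hmu a]
    ring
  refine ⟨key1, ?_⟩
  rw [key1]
  ring
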